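/- arXiv:2301.05127 — 3 statements merged into one kernel-verified Lean document; each statement's English description precedes it below -/
import Mathlib

section
/- The symmetric tridiagonal matrix $T_n$ of size $n$ with diagonal entries $4$ and off-diagonal entries $1$ is invertible, and its inverse entries decay exponentially away from the diagonal: $|(T_n^{-1})_{ij}| \leq C \, q^{|i-j|}$ with $q = 2 - \sqrt{3}$ and a constant $C$ independent of $n$, $i$, $j$. -/
/-- The symmetric tridiagonal matrix with diagonal `4` and off-diagonal `1`. -/
def Tmat (n : ℕ) : Matrix (Fin n) (Fin n) ℝ := fun i j =>
  if (i : ℕ) = (j : ℕ) then 4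
  else if (i : ℕ) + 1 = (j : ℕ) ∨ (j : ℕ) + 1 = (i : ℕ) then 1
  else 0

/-- Continuant sequence: determinants of the leading principal minors of tridiag(1,4,1). -/
noncomputable def th : ℕ → ℝ
  | 0 => 1
  | 1 => 4
  | n+2 => 4 * th (n+1) - th n

lemma th_zero : th 0 = 1 := rfl
lemma th_one : th 1 = 4 := rfl
lemma th_rec (n : ℕ) : th (n+2) = 4 * th (n+1) - th n := rfl

lemma s3_sq : Real.sqrt 3 ^ 2 = 3 := Real.sq_sqrt (by norm_num)
lemma s3_pos : 0 < Real.sqrt 3 := Real.sqrt_pos.mpr (by norm_num)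
lemma s3_gt : 1.7 < Real.sqrt 3 := by nlinarith [s3_sq, s3_pos]
lemma s3_lt : Real.sqrt 3 < 1.8 := by nlinarith [s3_sq, s3_pos]

lemma th_closed : ∀ k : ℕ, th k =
    ((2 + Real.sqrt 3)^(k+1) - (2 - Real.sqrt 3)^(k+1)) / (2 * Real.sqrt 3) := by
  have hq2 : (2 - Real.sqrt 3)^2 = 4*(2 - Real.sqrt 3) - 1 := by nlinarith [s3_sq]
  have hr2 : (2 + Real.sqrt 3)^2 = 4*(2 + Real.sqrt 3) - 1 := by nlinarith [s3_sq]
  have H : ∀ k : ℕ, th k = ((2 + Real.sqrt 3)^(k+1) - (2 - Real.sqrt 3)^(k+1)) / (2 * Real.sqrt 3)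
      ∧ th (k+1) = ((2 + Real.sqrt 3)^(k+2) - (2 - Real.sqrt 3)^(k+2)) / (2 * Real.sqrt 3) := by
    intro k
    induction k with
    | zero =>
      constructor
      · rw [th_zero]; field_simp; ring
      · rw [th_one]; field_simp; ring
    | succ k ih =>
      obtain ⟨h1, h2⟩ := ih
      refine ⟨h2, ?_⟩
      rw [th_rec, h1, h2]
      have hs : (2 - Real.sqrt 3)^(k+3) = 4 * (2 - Real.sqrt 3)^(k+2) - (2 - Real.sqrt 3)^(k+1) := by
        have e1 : (2 - Real.sqrt 3)^(k+3) = (2 - Real.sqrt 3)^(k+1) * (2 - Real.sqrt 3)^2 := by ring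
        have e2 : (2 - Real.sqrt 3)^(k+2) = (2 - Real.sqrt 3)^(k+1) * (2 - Real.sqrt 3) := by ring
        rw [e1, e2]; linear_combination ((2 - Real.sqrt 3)^(k+1)) * hq2
      have hr : (2 + Real.sqrt 3)^(k+3) = 4 * (2 + Real.sqrt 3)^(k+2) - (2 + Real.sqrt 3)^(k+1) := by
        have e1 : (2 + Real.sqrt 3)^(k+3) = (2 + Real.sqrt 3)^(k+1) * (2 + Real.sqrt 3)^2 := by ring
        have e2 : (2 + Real.sqrt 3)^(k+2) = (2 + Real.sqrt 3)^(k+1) * (2 + Real.sqrt 3) := by ring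
        rw [e1, e2]; linear_combination ((2 + Real.sqrt 3)^(k+1)) * hr2
      rw [hr, hs]; ring
  exact fun k => (H k).1

lemma th_ge (k : ℕ) : 1 ≤ th k ∧ 3 * th k ≤ th (k+1) := by
  induction k with
  | zero => rw [th_zero, th_one]; norm_num
  | succ k ih =>
    obtain ⟨h1, h2⟩ := ih
    refine ⟨by linarith, ?_⟩
    rw [th_rec]; linarith

lemma th_pos (k : ℕ) : 0 < th k := by linarith [(th_ge k).1]

set_option maxHeartbeats 800000 in
/-- Key inequality: `θ_a θ_b ≤ q^d θ_{a+b+d+1}` with `q = 2 - √3`. -/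
lemma th_key (a b d : ℕ) : th a * th b ≤ (2 - Real.sqrt 3)^d * th (a+b+d+1) := by
  have h2 := s3_sq
  have hlt := s3_lt
  have hgt := s3_gt
  set s3 := Real.sqrt 3
  have hs : (0:ℝ) < 2 - s3 := by linarith
  have hs1 : (2:ℝ) - s3 ≤ 1 := by linarith
  have hr1 : (1:ℝ) ≤ 2 + s3 := by linarith
  have hrs : (2 + s3) * (2 - s3) = 1 := by nlinarith
  rw [th_closed a, th_closed b, th_closed (a+b+d+1)]
  set r := (2:ℝ) + s3
  set q := (2:ℝ) - s3
  have hra : (1:ℝ) ≤ r^(a+1) := one_le_pow₀ hr1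
  have hrb : (1:ℝ) ≤ r^(b+1) := one_le_pow₀ hr1
  have hqa : (0:ℝ) < q^(a+1) := pow_pos hs _
  have hqb : (0:ℝ) < q^(b+1) := pow_pos hs _
  have hab : q^(a+1) ≤ r^(a+1) := pow_le_pow_left₀ (le_of_lt hs) (by linarith) _
  have hbb : q^(b+1) ≤ r^(b+1) := pow_le_pow_left₀ (le_of_lt hs) (by linarith) _
  have hL : (r^(a+1) - q^(a+1)) * (r^(b+1) - q^(b+1)) ≤ r^(a+1) * r^(b+1) := by nlinarith
  have hpow1 : q^d * r^(a+b+d+1+1) = r^(a+1) * r^(b+1) := by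
    have e : r^(a+b+d+1+1) = r^d * (r^(a+1) * r^(b+1)) := by
      rw [← pow_add, ← pow_add]; congr 1; omega
    rw [e, ← mul_assoc, ← mul_pow, mul_comm q r, hrs, one_pow, one_mul]
  have hpow2 : q^d * q^(a+b+d+1+1) = q^(a+b+2*d+2) := by rw [← pow_add]; ring_nf
  have hq2 : q^(a+b+2*d+2) ≤ q^2 := by
    apply pow_le_pow_of_le_one (le_of_lt hs) hs1; omega
  have hrarb : (1:ℝ) ≤ r^(a+1) * r^(b+1) := one_le_mul_of_one_le_of_one_le hra hrb
  have hq2' : q^2 ≤ q^2 * (r^(a+1) * r^(b+1)) := by nlinarith [pow_pos hs 2]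
  have h12 : (0:ℝ) < 2 * s3 := by linarith
  rw [div_mul_div_comm, mul_div_assoc']
  rw [div_le_div_iff₀ (by positivity) h12]
  have hZ : r^(a+1)*r^(b+1) * (1 - q^2) ≤ q^d * (r^(a+b+d+1+1) - q^(a+b+d+1+1)) := by
    have e : q^d * (r^(a+b+d+1+1) - q^(a+b+d+1+1)) = r^(a+1)*r^(b+1) - q^(a+b+2*d+2) := by
      rw [mul_sub, hpow1, hpow2]
    rw [e]; nlinarith
  have hq2e : q^2 = 7 - 4*s3 := by simp only [q]; nlinarith
  have key : 2*s3 ≤ (1 - q^2) * (2*s3*(2*s3)) := by rw [hq2e]; nlinarith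
  calc (r^(a+1) - q^(a+1)) * (r^(b+1) - q^(b+1)) * (2*s3)
      ≤ r^(a+1) * r^(b+1) * (2*s3) := mul_le_mul_of_nonneg_right hL (le_of_lt h12)
    _ ≤ (r^(a+1)*r^(b+1) * (1 - q^2)) * (2*s3*(2*s3)) := by
        have := mul_le_mul_of_nonneg_left key (le_trans zero_le_one hrarb)
        calc r^(a+1) * r^(b+1) * (2*s3) ≤ r^(a+1)*r^(b+1) * ((1 - q^2) * (2*s3*(2*s3))) := this
          _ = (r^(a+1)*r^(b+1) * (1 - q^2)) * (2*s3*(2*s3)) := by ring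
    _ ≤ (q^d * (r^(a+b+d+1+1) - q^(a+b+d+1+1))) * (2*s3*(2*s3)) := by
        apply mul_le_mul_of_nonneg_right hZ
        positivity
/-- Product identity for continuants. -/
lemma thE : ∀ b a : ℕ, th (a+1) * th (b+1) = th a * th b + th (a+b+2) := by
  have H : ∀ b, (∀ a, th (a+1) * th (b+1) = th a * th b + th (a+b+2)) ∧
      (∀ a, th (a+1) * th (b+2) = th a * th (b+1) + th (a+b+3)) := by
    intro b
    induction b with
    | zero =>
      constructor
      · intro a; rw [th_one, th_zero, th_rec]; ring
      · intro a
        have h2 : th 2 = 15 := by rw [th_rec, th_one, th_zero]; norm_num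
        have e3 : th (a+3) = 4*(4*th (a+1) - th a) - th (a+1) := by
          rw [show a+3 = (a+1)+2 from rfl, th_rec, th_rec]
        rw [h2, th_one, e3]; ring
    | succ b ih =>
      obtain ⟨h1, h2⟩ := ih
      refine ⟨h2, fun a => ?_⟩
      have r0 : th (b+2) = 4 * th (b+1) - th b := th_rec b
      have r1 : th (b+3) = 4 * th (b+2) - th (b+1) := th_rec (b+1)
      have r2 : th (a+b+4) = 4 * th (a+b+3) - th (a+b+2) := th_rec (a+b+2)
      have g1 := h1 a
      have g2 := h2 a
      rw [show b+1+2 = b+3 from rfl, show a+(b+1)+3 = a+b+4 from by omega,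
        show b+1+1 = b+2 from rfl]
      calc th (a+1) * th (b+3) = 4*(th (a+1) * th (b+2)) - th (a+1) * th (b+1) := by
            rw [r1]; ring
        _ = th a * th (b+2) + th (a+b+4) := by
            rw [g1, g2, r0, r2]; ring
  exact fun b a => (H b).1 a

/-- Unnormalized entries of the inverse. -/
noncomputable def bent (n p q : ℕ) : ℝ :=
  (-1:ℝ)^(p+q) * th (min p q) * th (n - 1 - max p q)

/-- The candidate inverse matrix. -/
noncomputable def Bmat (n : ℕ) : Matrix (Fin n) (Fin n) ℝ := fun i j =>
  bent n (i:ℕ) (j:ℕ) / th n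

lemma neg_one_pow_succ (p : ℕ) : (-1:ℝ)^(p+1) = -(-1:ℝ)^p := by
  rw [pow_succ]; ring

lemma neg_one_pow_add_two (p : ℕ) : (-1:ℝ)^(p+2) = (-1:ℝ)^p := by
  rw [pow_add]; norm_num

/-- The key row relation. -/
lemma row_rel (n p k : ℕ) (hp : p < n) (hk : k < n) :
    4 * bent n p k + (if p+1 < n then bent n (p+1) k else 0)
      + (if 0 < p then bent n (p-1) k else 0) = if p = k then th n else 0 := by
  unfold bent
  rcases Nat.lt_trichotomy p k with h | h | h
  · -- p < k
    rw [if_pos (show p+1 < n from by omega), if_neg (show ¬(p = k) from by omega)]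
    rw [show min p k = p from by omega, show max p k = k from by omega,
      show min (p+1) k = p+1 from by omega, show max (p+1) k = k from by omega]
    rcases Nat.eq_zero_or_pos p with rfl | hp0
    · rw [if_neg (show ¬(0 < 0) from by omega)]
      rw [show 0+1+k = (0+k)+1 from by omega, neg_one_pow_succ, th_zero, th_one]
      ring
    · obtain ⟨m, rfl⟩ : ∃ m, p = m+1 := ⟨p-1, by omega⟩
      rw [if_pos hp0, show m+1-1 = m from by omega,
        show min m k = m from by omega, show max m k = k from by omega,
        show m+1+1+k = (m+k)+2 from by omega, show m+1+k = (m+k)+1 from by omega,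
        neg_one_pow_add_two, neg_one_pow_succ, th_rec]
      ring
  · -- p = k
    subst h
    rw [if_pos rfl]
    rw [show min p p = p from by omega, show max p p = p from by omega]
    have hev : (-1:ℝ)^(p+p) = 1 := Even.neg_one_pow ⟨p, by omega⟩
    by_cases h1 : p+1 < n
    · rw [if_pos h1, show min (p+1) p = p from by omega, show max (p+1) p = p+1 from by omega,
        show p+1+p = (p+p)+1 from by omega, neg_one_pow_succ, hev]
      rcases Nat.eq_zero_or_pos p with rfl | hp0
      · rw [if_neg (show ¬(0 < 0) from by omega)]
        obtain ⟨t, rfl⟩ : ∃ t, n = t+2 := ⟨n-2, by omega⟩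
        rw [show t+2-1-0 = t+1 from by omega, show t+2-1-(0+1) = t from by omega,
          th_zero, th_rec]
        ring
      · obtain ⟨m, rfl⟩ : ∃ m, p = m+1 := ⟨p-1, by omega⟩
        rw [if_pos hp0, show m+1-1 = m from by omega,
          show min m (m+1) = m from by omega, show max m (m+1) = m+1 from by omega,
          show m+(m+1) = (m+m)+1 from by omega, neg_one_pow_succ,
          show (-1:ℝ)^(m+m) = 1 from Even.neg_one_pow ⟨m, by omega⟩]
        obtain ⟨t, rfl⟩ : ∃ t, n = m+3+t := ⟨n-(m+3), by omega⟩
        rw [show m+3+t-1-(m+1) = t+1 from by omega, show m+3+t-1-(m+1+1) = t from by omega]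
        have hE := thE t (m+1)
        rw [show m+1+1 = m+2 from rfl, show m+1+t+2 = m+3+t from by omega] at hE
        have hR := th_rec m
        linear_combination hE - th (t+1) * hR
    · -- p+1 = n
      rw [if_neg h1, hev]
      rcases Nat.eq_zero_or_pos p with rfl | hp0
      · rw [if_neg (show ¬(0 < 0) from by omega), show n = 1 from by omega]
        rw [show 1-1-0 = 0 from by omega, th_zero, th_one]
        ring
      · obtain ⟨m, rfl⟩ : ∃ m, p = m+1 := ⟨p-1, by omega⟩
        rw [if_pos hp0, show m+1-1 = m from by omega,
          show min m (m+1) = m from by omega, show max m (m+1) = m+1 from by omega,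
          show m+(m+1) = (m+m)+1 from by omega, neg_one_pow_succ,
          show (-1:ℝ)^(m+m) = 1 from Even.neg_one_pow ⟨m, by omega⟩,
          show n = m+2 from by omega]
        rw [show m+2-1-(m+1) = 0 from by omega, th_zero, th_rec]
        ring
  · -- k < p
    rw [if_neg (show ¬(p = k) from by omega), if_pos (show 0 < p from by omega)]
    obtain ⟨m, rfl⟩ : ∃ m, p = m+1 := ⟨p-1, by omega⟩
    rw [show m+1-1 = m from by omega,
      show min (m+1) k = k from by omega, show max (m+1) k = m+1 from by omega,
      show min m k = k from by omega, show max m k = m from by omega,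
      show m+1+k = (m+k)+1 from by omega, neg_one_pow_succ]
    by_cases h1 : m+1+1 < n
    · rw [if_pos h1, show min (m+1+1) k = k from by omega,
        show max (m+1+1) k = m+2 from by omega,
        show m+1+1+k = (m+k)+2 from by omega, neg_one_pow_add_two]
      obtain ⟨t, rfl⟩ : ∃ t, n = m+3+t := ⟨n-(m+3), by omega⟩
      rw [show m+3+t-1-(m+1) = t+1 from by omega, show m+3+t-1-(m+2) = t from by omega,
        show m+3+t-1-m = t+2 from by omega, th_rec]
      ring
    · rw [if_neg h1, show n = m+2 from by omega]
      rw [show m+2-1-(m+1) = 0 from by omega, show m+2-1-m = 1 from by omega,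
        th_zero, th_one]
      ring

lemma Tsplit (n : ℕ) (i j : Fin n) (x : ℝ) :
    Tmat n i j * x = (if (i:ℕ) = (j:ℕ) then 4*x else 0)
      + (if (i:ℕ)+1 = (j:ℕ) then x else 0) + (if (j:ℕ)+1 = (i:ℕ) then x else 0) := by
  unfold Tmat
  split_ifs <;> first | (exfalso; omega) | ring

lemma sum_diag (n : ℕ) (i : Fin n) (f : Fin n → ℝ) :
    (∑ j : Fin n, if (i:ℕ) = (j:ℕ) then f j else 0) = f i := by
  rw [Finset.sum_eq_single i]
  · rw [if_pos rfl]
  · intro j _ hj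
    rw [if_neg (fun hc => hj (Fin.ext hc).symm)]
  · intro hmem; exact absurd (Finset.mem_univ i) hmem

lemma sum_up (n : ℕ) (c : ℕ) (f : Fin n → ℝ) :
    (∑ j : Fin n, if c = (j:ℕ) then f j else 0)
      = if h : c < n then f ⟨c, h⟩ else 0 := by
  split
  · next h =>
    rw [Finset.sum_eq_single (⟨c, h⟩ : Fin n)]
    · rw [if_pos rfl]
    · intro j _ hj
      rw [if_neg (fun hc => hj (Fin.ext hc.symm))]
    · intro hmem; exact absurd (Finset.mem_univ _) hmem
  · next h =>
    apply Finset.sum_eq_zero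
    intro j _
    rw [if_neg]
    have := j.isLt
    omega

lemma TB (n : ℕ) : Tmat n * Bmat n = 1 := by
  ext i k
  rw [Matrix.mul_apply]
  have step : ∀ j : Fin n, Tmat n i j * Bmat n j k
      = (if (i:ℕ) = (j:ℕ) then 4 * Bmat n j k else 0)
        + (if (i:ℕ)+1 = (j:ℕ) then Bmat n j k else 0)
        + (if (j:ℕ)+1 = (i:ℕ) then Bmat n j k else 0) := fun j => Tsplit n i j _
  rw [Finset.sum_congr rfl (fun j _ => step j), Finset.sum_add_distrib,
    Finset.sum_add_distrib, sum_diag]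
  have e2 : (∑ j : Fin n, if (i:ℕ)+1 = (j:ℕ) then Bmat n j k else 0)
      = if h : (i:ℕ)+1 < n then Bmat n ⟨(i:ℕ)+1, h⟩ k else 0 := sum_up n ((i:ℕ)+1) _
  have e3 : (∑ j : Fin n, if (j:ℕ)+1 = (i:ℕ) then Bmat n j k else 0)
      = if h : (i:ℕ)-1 < n then (if 0 < (i:ℕ) then Bmat n ⟨(i:ℕ)-1, h⟩ k else 0) else 0 := by
    rw [← sum_up n ((i:ℕ)-1) (fun j => if 0 < (i:ℕ) then Bmat n j k else 0)]
    apply Finset.sum_congr rfl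
    intro j _
    by_cases hij : (j:ℕ)+1 = (i:ℕ)
    · rw [if_pos hij, if_pos (by omega), if_pos (by omega)]
    · by_cases hij2 : (i:ℕ)-1 = (j:ℕ)
      · rw [if_neg hij, if_pos hij2, if_neg (by omega)]
      · rw [if_neg hij, if_neg hij2]
  rw [e2, e3]
  have hn : th n ≠ 0 := ne_of_gt (th_pos n)
  have hi := i.isLt
  have hk := k.isLt
  have main := row_rel n (i:ℕ) (k:ℕ) hi hk
  show 4 * Bmat n i k + _ + _ = (1 : Matrix (Fin n) (Fin n) ℝ) i k
  rw [Matrix.one_apply]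
  unfold Bmat
  rw [dif_pos (show (i:ℕ)-1 < n from by omega)]
  have d1 : (if h : (i:ℕ)+1 < n then bent n ((⟨(i:ℕ)+1, h⟩ : Fin n):ℕ) (k:ℕ) / th n else 0)
      = (if (i:ℕ)+1 < n then bent n ((i:ℕ)+1) (k:ℕ) else 0) / th n := by
    split
    · next h => rfl
    · next h => rw [zero_div]
  have d2 : (if 0 < (i:ℕ) then bent n ((⟨(i:ℕ)-1, show (i:ℕ)-1 < n from by omega⟩ : Fin n):ℕ) (k:ℕ) / th n else 0)
      = (if 0 < (i:ℕ) then bent n ((i:ℕ)-1) (k:ℕ) else 0) / th n := by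
    split
    · next h => rfl
    · next h => rw [zero_div]
  rw [d1, d2, show 4 * (bent n (i:ℕ) (k:ℕ) / th n)
      = 4 * bent n (i:ℕ) (k:ℕ) / th n from (mul_div_assoc _ _ _).symm,
    ← add_div, ← add_div, main]
  by_cases hik : i = k
  · rw [if_pos (show (i:ℕ) = (k:ℕ) from by rw [hik]), if_pos hik, div_self hn]
  · rw [if_neg (fun hc => hik (Fin.ext hc)), if_neg hik, zero_div]

/-- The tridiagonal matrix tridiag(1,4,1) is invertible and the entries of its
inverse decay exponentially away from the diagonal with rate 2 - √3, with a
constant independent of the size and of the indices. -/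
theorem tridiag_inverse_decay :
    (∀ n : ℕ, IsUnit (Tmat n).det) ∧
    ∃ C : ℝ, 0 < C ∧ ∀ n : ℕ, ∀ i j : Fin n,
      |(Tmat n)⁻¹ i j| ≤ C * (2 - Real.sqrt 3) ^ ((i : ℤ) - (j : ℤ)).natAbs := by
  constructor
  · intro n
    exact Matrix.isUnit_det_of_right_inverse (TB n)
  · refine ⟨1, one_pos, ?_⟩
    intro n i j
    rw [Matrix.inv_eq_right_inv (TB n)]
    have hp : (i:ℕ) < n := i.isLt
    have hq : (j:ℕ) < n := j.isLt
    have hd : ((i : ℤ) - (j : ℤ)).natAbs = max (i:ℕ) (j:ℕ) - min (i:ℕ) (j:ℕ) := by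
      omega
    show |bent n (i:ℕ) (j:ℕ) / th n| ≤ _
    unfold bent
    rw [abs_div, abs_mul, abs_mul, abs_pow, abs_neg, abs_one, one_pow, one_mul,
      abs_of_pos (th_pos _), abs_of_pos (th_pos _), abs_of_pos (th_pos _)]
    rw [div_le_iff₀ (th_pos n), hd, one_mul]
    have key := th_key (min (i:ℕ) (j:ℕ)) (n - 1 - max (i:ℕ) (j:ℕ))
      (max (i:ℕ) (j:ℕ) - min (i:ℕ) (j:ℕ))
    rw [show min (i:ℕ) (j:ℕ) + (n - 1 - max (i:ℕ) (j:ℕ))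
        + (max (i:ℕ) (j:ℕ) - min (i:ℕ) (j:ℕ)) + 1 = n from by omega] at key
    exact key
end

section
/- Exact splitting-step velocity update: suppose $\Psi' = -a\Psi - bg$ and $v' = -\frac{1}{\rho}(\frac{1}{k}g + \Psi)$ on $[t_n, t_{n+1}]$ with constants $a = d/k + \alpha > 0$, $b = d/k^2$, $g$, $\rho > 0$, $k > 0$. Then $v(t_{n+1}) = v(t_n) + \frac{1}{\rho} \frac{k}{d + \alpha k}\big(\Psi(t_{n+1}) - \Psi(t_n)\big) - \frac{\Delta t}{\rho} \frac{\alpha}{d + \alpha k} g$. -/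
/-- Exact splitting-step velocity update for subsystem (A) of the ADE-PML: if
Ψ' = -aΨ - b·g and v' = -(1/ρ)((1/k)g + Ψ) with a = d/k + α > 0, b = d/k²,
frozen stress gradient g, ρ > 0, k > 0, then
v(t₁) = v(t₀) + (1/ρ)·k/(d+αk)·(Ψ(t₁) - Ψ(t₀)) - (Δt/ρ)·α/(d+αk)·g. -/
theorem pml_velocity_update (d α k ρ g t0 t1 Δt : ℝ)
    (hk : 0 < k) (hρ : 0 < ρ) (ha : 0 < d / k + α)
    (ht : t0 ≤ t1) (hΔt : Δt = t1 - t0) (Ψ v : ℝ → ℝ)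
    (hΨ : ∀ t ∈ Set.Icc t0 t1,
      HasDerivAt Ψ (-(d / k + α) * Ψ t - d / k ^ 2 * g) t)
    (hv : ∀ t ∈ Set.Icc t0 t1,
      HasDerivAt v (-(1 / ρ) * ((1 / k) * g + Ψ t)) t) :
    v t1 = v t0 + (1 / ρ) * (k / (d + α * k)) * (Ψ t1 - Ψ t0)
      - (Δt / ρ) * (α / (d + α * k)) * g := by
  have hdk : 0 < d + α * k := by
    have := mul_pos ha hk
    have hk' := hk.ne'
    field_simp at this
    linarith [this]
  set F : ℝ → ℝ := fun t =>
    v t - (k / (ρ * (d + α * k))) * Ψ t + (α * g / (ρ * (d + α * k))) * t with hF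
  have hF' : ∀ t ∈ Set.Icc t0 t1, HasDerivAt F 0 t := by
    intro t htmem
    have h1 := hv t htmem
    have h2 := hΨ t htmem
    have h3 : HasDerivAt F
        (-(1 / ρ) * ((1 / k) * g + Ψ t)
          - (k / (ρ * (d + α * k))) * (-(d / k + α) * Ψ t - d / k ^ 2 * g)
          + (α * g / (ρ * (d + α * k)))) t := by
      have hid : HasDerivAt (fun y => (α * g / (ρ * (d + α * k))) * y)
          (α * g / (ρ * (d + α * k))) t := by
        simpa using (hasDerivAt_id t).const_mul (α * g / (ρ * (d + α * k)))
      exact (h1.sub (h2.const_mul _)).add hid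
    convert h3 using 1
    have hdk' : d + α * k ≠ 0 := hdk.ne'
    have hdk1 : k * α + d ≠ 0 := ne_of_gt (by linarith [hdk])
    have hdk2 : d + k * α ≠ 0 := ne_of_gt (by linarith [hdk])
    field_simp
    ring
  have hconst : F t1 = F t0 := by
    have := constant_of_has_deriv_right_zero
      (f := F) (a := t0) (b := t1)
      (fun t htmem => ((hF' t htmem).continuousAt.continuousWithinAt))
      (fun t htmem => ((hF' t (Set.mem_Icc_of_Ico htmem)).hasDerivWithinAt))
    exact this t1 (Set.right_mem_Icc.mpr ht)
  have hexp : v t1 - (k / (ρ * (d + α * k))) * Ψ t1 + (α * g / (ρ * (d + α * k))) * t1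
      = v t0 - (k / (ρ * (d + α * k))) * Ψ t0 + (α * g / (ρ * (d + α * k))) * t0 := hconst
  subst hΔt
  have hdk' : d + α * k ≠ 0 := hdk.ne'
  have hdk1 : k * α + d ≠ 0 := ne_of_gt (by linarith [hdk])
  have hdk2 : d + k * α ≠ 0 := ne_of_gt (by linarith [hdk])
  field_simp at hexp ⊢
  linarith [hexp]
end

section
/- Truncation error of the exponential Euler scheme: if $\Psi' = -a\Psi - b g(t)$ with $a > 0$ and $g$ continuously differentiable with $|g'(t)| \leq G$ on $[t_n, t_{n+1}]$, then the exponential Euler approximation $\tilde\Psi = e^{-a\Delta t}\Psi(t_n) - b\frac{1 - e^{-a\Delta t}}{a} g(t_n)$ satisfies $|\Psi(t_{n+1}) - \tilde\Psi| \leq \frac{|b| G \Delta t^2}{2}$. -/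
/-- Truncation error of the exponential Euler scheme: for Ψ' = -aΨ - b·g(t)
with a > 0 and g continuously differentiable with |g'| ≤ G on the step, the
exponential Euler approximation has error at most |b|·G·Δt²/2, uniformly in a. -/
theorem exponential_euler_truncation_error (a b G t0 t1 Δt : ℝ) (ha : 0 < a)
    (ht : t0 ≤ t1) (hΔt : Δt = t1 - t0) (Ψ g g' : ℝ → ℝ)
    (hg : ∀ t ∈ Set.Icc t0 t1, HasDerivAt g (g' t) t)
    (hg'cont : ContinuousOn g' (Set.Icc t0 t1))
    (hG : ∀ t ∈ Set.Icc t0 t1, |g' t| ≤ G)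
    (hODE : ∀ t ∈ Set.Icc t0 t1, HasDerivAt Ψ (-a * Ψ t - b * g t) t) :
    |Ψ t1 - (Real.exp (-a * Δt) * Ψ t0 - b * ((1 - Real.exp (-a * Δt)) / a) * g t0)|
      ≤ |b| * G * Δt ^ 2 / 2 := by
  have hIcc : Set.uIcc t0 t1 = Set.Icc t0 t1 := Set.uIcc_of_le ht
  have hgcont : ContinuousOn g (Set.Icc t0 t1) :=
    fun t htm => (hg t htm).continuousAt.continuousWithinAt
  set X := Real.exp (a * Δt) with hX
  have hXpos : 0 < X := Real.exp_pos _
  have hE : Real.exp (-a * Δt) = X⁻¹ := by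
    rw [hX, ← Real.exp_neg]; ring_nf
  have hexp : ∀ t : ℝ, HasDerivAt (fun s => Real.exp (a * (s - t0)))
      (a * Real.exp (a * (t - t0))) t := by
    intro t
    have h1 : HasDerivAt (fun s : ℝ => a * (s - t0)) a t := by
      simpa using ((hasDerivAt_id t).sub_const t0).const_mul a
    simpa [mul_comm] using h1.exp
  have hexpcont : ContinuousOn (fun s => Real.exp (a * (s - t0))) (Set.Icc t0 t1) :=
    (Real.continuous_exp.comp (continuous_const.mul (continuous_id.sub continuous_const))).continuousOn
  -- FTC 1
  have hFTC1 : ∫ s in t0..t1, (-b) * Real.exp (a * (s - t0)) * g s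
      = X * Ψ t1 - Ψ t0 := by
    have h := intervalIntegral.integral_eq_sub_of_hasDerivAt
      (f := fun s => Real.exp (a * (s - t0)) * Ψ s)
      (f' := fun s => (-b) * Real.exp (a * (s - t0)) * g s) (a := t0) (b := t1) ?_ ?_
    · rw [h, sub_self, mul_zero, Real.exp_zero, one_mul, hX, hΔt]
    · intro t htm
      rw [hIcc] at htm
      have := (hexp t).mul (hODE t htm)
      convert this using 1
      case e'_4 => rfl
      case e'_8 => rfl
      case e'_9 => ring
    · apply ContinuousOn.intervalIntegrable
      rw [hIcc]
      exact (continuousOn_const.mul hexpcont).mul hgcont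
  -- FTC 2
  have hFTC2 : ∫ s in t0..t1, Real.exp (a * (s - t0)) = (X - 1) / a := by
    have h := intervalIntegral.integral_eq_sub_of_hasDerivAt
      (f := fun s => Real.exp (a * (s - t0)) / a)
      (f' := fun s => Real.exp (a * (s - t0))) (a := t0) (b := t1) ?_ ?_
    · rw [h, sub_self, mul_zero, Real.exp_zero, hX, hΔt]
      field_simp
    · intro t htm
      have := (hexp t).div_const a
      convert this using 1
      · rfl
      · field_simp
    · apply ContinuousOn.intervalIntegrable
      rw [hIcc]
      exact hexpcont
  -- Key identity
  have hid : Ψ t1 - (Real.exp (-a * Δt) * Ψ t0 - b * ((1 - Real.exp (-a * Δt)) / a) * g t0)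
      = ∫ s in t0..t1, (-b) * (X⁻¹ * Real.exp (a * (s - t0))) * (g s - g t0) := by
    have hsplit : (fun s => (-b) * (X⁻¹ * Real.exp (a * (s - t0))) * (g s - g t0))
        = fun s => X⁻¹ * ((-b) * Real.exp (a * (s - t0)) * g s)
          + (b * g t0 * X⁻¹) * Real.exp (a * (s - t0)) := by
      funext s; ring
    rw [hsplit, intervalIntegral.integral_add, intervalIntegral.integral_const_mul,
      intervalIntegral.integral_const_mul, hFTC1, hFTC2, hE]
    · field_simp
      ring
    · apply ContinuousOn.intervalIntegrable
      rw [hIcc]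
      exact continuousOn_const.mul ((continuousOn_const.mul hexpcont).mul hgcont)
    · apply ContinuousOn.intervalIntegrable
      rw [hIcc]
      exact continuousOn_const.mul hexpcont
  rw [hid]
  have hG0 : 0 ≤ G := le_trans (abs_nonneg _) (hG t0 ⟨le_refl t0, ht⟩)
  -- pointwise bound
  have hbound : ∀ s ∈ Set.Icc t0 t1,
      |(-b) * (X⁻¹ * Real.exp (a * (s - t0))) * (g s - g t0)| ≤ |b| * (G * (s - t0)) := by
    intro s hs
    have hs0 := hs.1
    have hs1 := hs.2
    have hfac : X⁻¹ * Real.exp (a * (s - t0)) = Real.exp (a * (s - t0) - a * Δt) := by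
      rw [Real.exp_sub, hX]; ring
    have hfac1 : X⁻¹ * Real.exp (a * (s - t0)) ≤ 1 := by
      rw [hfac]
      apply Real.exp_le_one_iff.mpr
      rw [hΔt]
      nlinarith
    have hfac0 : 0 ≤ X⁻¹ * Real.exp (a * (s - t0)) := by positivity
    have hmvt : |g s - g t0| ≤ G * (s - t0) := by
      have := Convex.norm_image_sub_le_of_norm_hasDerivWithin_le
        (f := g) (f' := g') (C := G) (s := Set.Icc t0 t1)
        (fun x hx => (hg x hx).hasDerivWithinAt)
        (fun x hx => by simpa [Real.norm_eq_abs] using hG x hx)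
        (convex_Icc t0 t1) ⟨le_refl t0, ht⟩ hs
      simpa [Real.norm_eq_abs, abs_of_nonneg (sub_nonneg.mpr hs0)] using this
    rw [abs_mul, abs_mul, abs_neg, abs_of_nonneg hfac0]
    calc |b| * (X⁻¹ * Real.exp (a * (s - t0))) * |g s - g t0|
        ≤ |b| * 1 * (G * (s - t0)) := by
          apply mul_le_mul
          · exact mul_le_mul_of_nonneg_left hfac1 (abs_nonneg b)
          · exact hmvt
          · exact abs_nonneg _
          · positivity
      _ = |b| * (G * (s - t0)) := by ring
  calc |∫ s in t0..t1, (-b) * (X⁻¹ * Real.exp (a * (s - t0))) * (g s - g t0)|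
      ≤ ∫ s in t0..t1, |(-b) * (X⁻¹ * Real.exp (a * (s - t0))) * (g s - g t0)| := by
        have := intervalIntegral.norm_integral_le_integral_norm (μ := MeasureTheory.volume)
          (f := fun s => (-b) * (X⁻¹ * Real.exp (a * (s - t0))) * (g s - g t0)) ht
        simpa only [Real.norm_eq_abs] using this
    _ ≤ ∫ s in t0..t1, |b| * (G * (s - t0)) := by
        apply intervalIntegral.integral_mono_on ht
        · apply ContinuousOn.intervalIntegrable
          rw [hIcc]
          exact ((continuousOn_const.mul (continuousOn_const.mul hexpcont)).mul
            (hgcont.sub continuousOn_const)).abs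
        · apply ContinuousOn.intervalIntegrable
          rw [hIcc]
          exact continuousOn_const.mul (continuousOn_const.mul
            (continuousOn_id.sub continuousOn_const))
        · exact hbound
    _ = |b| * G * Δt ^ 2 / 2 := by
        rw [intervalIntegral.integral_const_mul]
        have : ∫ s in t0..t1, G * (s - t0) = G * (Δt ^ 2 / 2) := by
          rw [intervalIntegral.integral_const_mul]
          have h1 : (fun s : ℝ => s - t0) = fun s => (id : ℝ → ℝ) (s - t0) := rfl
          rw [h1, intervalIntegral.integral_comp_sub_right (fun x => (id : ℝ → ℝ) x) t0]
          simp only [id_eq, sub_self, integral_id]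
          rw [hΔt]; ring
        rw [this]
        ring
end
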